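/- Let L be an integral ℓ-monoid, let α be a fuzzy regular expression over a finite alphabet X with associated alphabet Y, let A = (A, X∪Y, δ^A, a₀, τ^A) be an arbitrary nondeterministic finite automaton recognizing ‖α_R‖, and let E be a right invariant crisp equivalence on A. Then R_{A/E}(E_a, E_b) = (R_A∘E)(a,b) for all a, b ∈ A, where R_{A/E} is the fuzzy relation constructed from the factor automaton A/E in the same way as R_A is constructed from A. -/

import Mathlib

attribute [local instance] Classical.propDecidable

/-- A lattice-ordered monoid (ℓ-monoid): a lattice with least element `⊥` and greatest
element `⊤`, together with a monoid structure (multiplication `*`, unit `1`, playing the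
role of `e`) such that `⊥` (playing the role of the scalar `0`) is absorbing and
multiplication distributes over binary joins on both sides. -/
class LMonoid (L : Type*) extends Lattice L, BoundedOrder L, Monoid L where
  mul_bot : ∀ x : L, x * ⊥ = ⊥
  bot_mul : ∀ x : L, ⊥ * x = ⊥
  mul_sup : ∀ x y z : L, x * (y ⊔ z) = x * y ⊔ x * z
  sup_mul : ∀ x y z : L, (x ⊔ y) * z = x * z ⊔ y * z

/-- An integral ℓ-monoid: the unit of the multiplication is the top element of the lattice. -/
class IntegralLMonoid (L : Type*) extends LMonoid L where
  one_eq_top : (1 : L) = ⊤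

/-- Fuzzy regular expressions over an alphabet `X` with scalars in `L`. -/
inductive FRE (X L : Type*) where
  | zero : FRE X L
  | eps : FRE X L
  | char : X → FRE X L
  | smul : L → FRE X L → FRE X L
  | plus : FRE X L → FRE X L → FRE X L
  | comp : FRE X L → FRE X L → FRE X L
  | star : FRE X L → FRE X L

/-- The set of scalars of `L` occurring in a fuzzy regular expression. -/
def FRE.scalars {X L : Type*} : FRE X L → Set L
  | .zero => ∅
  | .eps => ∅
  | .char _ => ∅
  | .smul lam β => insert lam β.scalars
  | .plus β γ => β.scalars ∪ γ.scalars
  | .comp β γ => β.scalars ∪ γ.scalars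
  | .star β => β.scalars

noncomputable section

namespace Fz

variable {L : Type*} [IntegralLMonoid L]

/-- Composition of fuzzy relations: `(R ∘ S)(a,b) = ⋁_{c} R(a,c) ⊗ S(c,b)`. -/
def fcomp {A : Type*} [Fintype A] (R S : A → A → L) : A → A → L :=
  fun a b => Finset.univ.sup fun c => R a c * S c b

/-- Composition of a fuzzy relation with a fuzzy set: `(R ∘ f)(a) = ⋁_{b} R(a,b) ⊗ f(b)`. -/
def fcompf {A : Type*} [Fintype A] (R : A → A → L) (f : A → L) : A → L :=
  fun a => Finset.univ.sup fun b => R a b * f b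

/-- Composition of a fuzzy set with a fuzzy relation: `(f ∘ R)(a) = ⋁_{b} f(b) ⊗ R(b,a)`. -/
def fcompfR {A : Type*} [Fintype A] (f : A → L) (R : A → A → L) : A → L :=
  fun a => Finset.univ.sup fun b => f b * R b a

/-- Powers of a fuzzy relation: `R⁰` is the crisp equality and `R^{k+1} = R^k ∘ R`. -/
def rpow {A : Type*} [Fintype A] (R : A → A → L) : ℕ → A → A → L
  | 0 => fun a b => if a = b then 1 else ⊥
  | k + 1 => fcomp (rpow R k) R

private def dstarAux {A Z : Type*} [Fintype A] (δ : A → Z → A → L) : A → List Z → A → L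
  | a, [], b => if a = b then 1 else ⊥
  | a, z :: w, b => Finset.univ.sup fun c => dstarAux δ a w c * δ c z b

/-- The extension of a fuzzy transition relation to words:
`δ(a, ε, b) = 1` if `a = b` and `⊥` otherwise, and
`δ(a, ux, b) = ⋁_{c} δ(a, u, c) ⊗ δ(c, x, b)`. -/
def dstar {A Z : Type*} [Fintype A] (δ : A → Z → A → L) (a : A) (w : List Z) (b : A) : L :=
  dstarAux δ a w.reverse b

/-- Fuzzy language recognized by a fuzzy automaton with a single crisp initial state `a0`:
`L(A)(u) = ⋁_{b} δ(a0, u, b) ⊗ τ(b)`. -/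
def lang {A Z : Type*} [Fintype A] (δ : A → Z → A → L) (a0 : A) (τ : A → L)
    (w : List Z) : L :=
  Finset.univ.sup fun b => dstar δ a0 w b * τ b

/-- Concatenation of fuzzy languages: `(fg)(u) = ⋁_{u = vw} f(v) ⊗ g(w)`
(a finite join over the factorizations of `u`). -/
def fconcat {X : Type*} (f g : List X → L) : List X → L :=
  fun u => (Finset.range (u.length + 1)).sup fun i => f (u.take i) * g (u.drop i)

/-- Powers of a fuzzy language: `f⁰` is the characteristic function of the empty word,
and `f^{n+1} = fⁿ f`. -/
def fpow {X : Type*} (f : List X → L) : ℕ → List X → L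
  | 0 => fun u => if u = [] then 1 else ⊥
  | n + 1 => fconcat (fpow f n) f

/-- `IsNorm α f` asserts that `f` is the fuzzy language `‖α‖` represented by the fuzzy
regular expression `α` (for the star, `‖β*‖(u)` is the least upper bound of the powers,
which is required to exist). -/
inductive IsNorm {X : Type*} : FRE X L → (List X → L) → Prop
  | zero : IsNorm .zero fun _ => ⊥
  | eps : IsNorm .eps fun u => if u = [] then 1 else ⊥
  | char (x : X) : IsNorm (.char x) fun u => if u = [x] then 1 else ⊥
  | smul (lam : L) {β : FRE X L} {f : List X → L} :
      IsNorm β f → IsNorm (.smul lam β) fun u => lam * f u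
  | plus {β γ : FRE X L} {f g : List X → L} :
      IsNorm β f → IsNorm γ g → IsNorm (.plus β γ) fun u => f u ⊔ g u
  | comp {β γ : FRE X L} {f g : List X → L} :
      IsNorm β f → IsNorm γ g → IsNorm (.comp β γ) (fconcat f g)
  | star {β : FRE X L} {f g : List X → L} :
      IsNorm β f → (∀ u, IsLUB {l | ∃ n : ℕ, l = fpow f n u} (g u)) →
      IsNorm (.star β) g

/-- The ordinary regular expression `α_R` over `X ∪ Y` obtained from a fuzzy regular
expression `α` by replacing each scalar `λ` by the associated letter `λ' = sc λ ∈ Y`. -/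
def toReg {X Y : Type*} (sc : L → Y) : FRE X L → RegularExpression (X ⊕ Y)
  | .zero => 0
  | .eps => 1
  | .char x => RegularExpression.char (Sum.inl x)
  | .smul lam β => RegularExpression.char (Sum.inr (sc lam)) * toReg sc β
  | .plus β γ => toReg sc β + toReg sc γ
  | .comp β γ => toReg sc β * toReg sc γ
  | .star β => (toReg sc β).star

/-- `U_Y(u)`: the set of words over `X ∪ Y` from which deleting all letters of `Y`
yields `u` (the shuffle of `u` with `Y*`). -/
def UY {X : Type*} (Y : Type*) (u : List X) : Set (List (X ⊕ Y)) :=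
  {v | v.filterMap (fun z => z.getLeft?) = u}

/-- The homomorphism `φ*_α : (X ∪ Y)* → (L, ⊗, 1)` determined by mapping every letter of
`X` to `1` and every letter `λ' ∈ Y` to the corresponding scalar `λ = φY λ'`. -/
def phiStar {X Y : Type*} (φY : Y → L) (v : List (X ⊕ Y)) : L :=
  (v.map (Sum.elim (fun _ => (1 : L)) φY)).prod

/-- The language `‖α_R‖` of the regular expression `α_R`, viewed as a fuzzy language
with membership values in `{0, 1} ⊆ L`. -/
def langR {X Y : Type*} (sc : L → Y) (α : FRE X L) (v : List (X ⊕ Y)) : L :=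
  if v ∈ (toReg sc α).matches' then 1 else ⊥

/-- The reflexive fuzzy relation `R` on the state set of a nondeterministic automaton over
`X ∪ Y`: `R(a,a) = 1` and, for `a ≠ b`, `R(a,b) = ⋁_{λ' ∈ Y} λ ⊗ δ(a, λ', b)`. -/
def Rstep {X Y A : Type*} [Fintype A] [Fintype Y] (φY : Y → L)
    (δ : A → X ⊕ Y → A → L) : A → A → L :=
  fun a b => if a = b then 1 else Finset.univ.sup fun y : Y => φY y * δ a (Sum.inr y) b

/-- The fuzzy relation `R_A = Rⁿ`, `n = |A|`: the least transitive fuzzy relation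
containing `R`. -/
def RA {X Y A : Type*} [Fintype A] [Fintype Y] (φY : Y → L)
    (δ : A → X ⊕ Y → A → L) : A → A → L :=
  rpow (Rstep φY δ) (Fintype.card A)

/-- The set `{φ*_α(v) ⊗ δ^A(a,v,b) : v ∈ U_Y(x)}` whose least upper bound defines the
transition `δ^{A_α}(a, x, b)` of the fuzzy automaton associated with `A` and `α`. -/
def dset {X Y A : Type*} [Fintype A] (φY : Y → L) (δ : A → X ⊕ Y → A → L)
    (a : A) (x : X) (b : A) : Set L :=
  {l | ∃ v ∈ UY Y [x], l = phiStar φY v * dstar δ a v b}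

/-- The set `{⋁_{b} φ*_α(v) ⊗ δ^A(a,v,b) ⊗ τ(b) : v ∈ Y*}` whose least upper bound defines
the terminal degree `τ^{A_α}(a)` of the fuzzy automaton associated with `A` and `α`. -/
def tset {X Y A : Type*} [Fintype A] (φY : Y → L) (δ : A → X ⊕ Y → A → L)
    (τ : A → L) (a : A) : Set L :=
  {l | ∃ w : List Y, l = Finset.univ.sup fun b =>
    phiStar φY ((w.map Sum.inr : List (X ⊕ Y))) *
      dstar δ a (w.map Sum.inr) b * τ b}


/-- The setoid on the state set induced by a crisp equivalence `E`
(`a ≈ b` iff `E(a,b) = 1`). -/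
def toSetoid {A : Type*} (E : A → A → L) (hrefl : ∀ a, E a a = 1)
    (hsymm : ∀ a b, E a b = E b a) (htrans : ∀ a b c, E a b * E b c ≤ E a c) :
    Setoid A where
  r a b := E a b = 1
  iseqv := by
    refine ⟨fun a => hrefl a, fun {a b} h => by rw [hsymm]; exact h, fun {a b c} h1 h2 => ?_⟩
    refine le_antisymm ?_ ?_
    · rw [IntegralLMonoid.one_eq_top (L := L)]; exact le_top
    · calc (1 : L) = 1 * 1 := (one_mul 1).symm
      _ = E a b * E b c := by rw [h1, h2]
      _ ≤ E a c := htrans a b c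

theorem erow {A : Type*} {E : A → A → L} (hsymm : ∀ a b, E a b = E b a)
    (htrans : ∀ a b c, E a b * E b c ≤ E a c) {a a' : A} (h : E a a' = 1) (c : A) :
    E a c = E a' c := by
  apply le_antisymm
  · have h' : E a' a = 1 := by rw [hsymm]; exact h
    calc E a c = E a' a * E a c := by rw [h', one_mul]
    _ ≤ E a' c := htrans a' a c
  · calc E a' c = E a a' * E a' c := by rw [h, one_mul]
    _ ≤ E a c := htrans a a' c

theorem sandwich_congr {A : Type*} [Fintype A] {E : A → A → L}
    (hsymm : ∀ a b, E a b = E b a) (htrans : ∀ a b c, E a b * E b c ≤ E a c)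
    (M : A → A → L) {a a' b b' : A} (ha : E a a' = 1) (hb : E b b' = 1) :
    fcomp (fcomp E M) E a b = fcomp (fcomp E M) E a' b' := by
  simp only [fcomp]
  have h1 : ∀ c, (Finset.univ.sup fun d => E a d * M d c) =
      Finset.univ.sup fun d => E a' d * M d c :=
    fun c => Finset.sup_congr rfl fun d _ => by rw [erow hsymm htrans ha d]
  have h2 : ∀ c, E c b = E c b' := fun c => by
    rw [hsymm c b, erow hsymm htrans hb c, hsymm b' c]
  exact Finset.sup_congr rfl fun c _ => by rw [h1 c, h2 c]

/-- The fuzzy transition relation of the factor automaton `A/E`: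
`δ^{A/E}(E_a, z, E_b) = (E ∘ δ_z ∘ E)(a, b)`. -/
def deltaQ {A Z : Type*} [Fintype A] (E : A → A → L) (hrefl : ∀ a, E a a = 1)
    (hsymm : ∀ a b, E a b = E b a) (htrans : ∀ a b c, E a b * E b c ≤ E a c)
    (δ : A → Z → A → L) :
    Quotient (toSetoid E hrefl hsymm htrans) → Z →
      Quotient (toSetoid E hrefl hsymm htrans) → L :=
  fun p z q =>
    Quotient.lift₂ (fun a b => fcomp (fcomp E (fun c d => δ c z d)) E a b)
      (fun _ _ _ _ ha hb => sandwich_congr hsymm htrans _ ha hb) p q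

/-- The terminal fuzzy set of the factor automaton `A/E`: `τ^{A/E}(E_a) = (τ^A ∘ E)(a)`. -/
def tauQ {A : Type*} [Fintype A] (E : A → A → L) (hrefl : ∀ a, E a a = 1)
    (hsymm : ∀ a b, E a b = E b a) (htrans : ∀ a b c, E a b * E b c ≤ E a c)
    (τ : A → L) : Quotient (toSetoid E hrefl hsymm htrans) → L :=
  Quotient.lift (fun a => fcompfR τ E a)
    (fun a a' h => by
      simp only [fcompfR]
      exact Finset.sup_congr rfl fun b _ => by
        rw [hsymm b a, erow hsymm htrans h b, hsymm a' b])

end Fz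

end


noncomputable section Stmt16Aux
open Fz

variable {L : Type*} [IntegralLMonoid L]

theorem aux_le_one (x : L) : x ≤ 1 := by
  rw [IntegralLMonoid.one_eq_top]; exact le_top

theorem aux_mul_le_mul {a b c d : L} (h1 : a ≤ b) (h2 : c ≤ d) : a * c ≤ b * d := by
  have hb : a * c ≤ b * c := by
    calc a * c ≤ a * c ⊔ b * c := le_sup_left
    _ = (a ⊔ b) * c := (LMonoid.sup_mul a b c).symm
    _ = b * c := by rw [sup_eq_right.mpr h1]
  have hd : b * c ≤ b * d := by
    calc b * c ≤ b * c ⊔ b * d := le_sup_left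
    _ = b * (c ⊔ d) := (LMonoid.mul_sup b c d).symm
    _ = b * d := by rw [sup_eq_right.mpr h2]
  exact hb.trans hd

theorem aux_sup_mul {I : Type*} (s : Finset I) (f : I → L) (x : L) :
    s.sup f * x = s.sup fun i => f i * x := by
  induction s using Finset.cons_induction with
  | empty => simpa using LMonoid.bot_mul x
  | cons a s ha ih => rw [Finset.sup_cons, Finset.sup_cons, LMonoid.sup_mul, ih]

theorem aux_mul_sup {I : Type*} (s : Finset I) (f : I → L) (x : L) :
    x * s.sup f = s.sup fun i => x * f i := by
  induction s using Finset.cons_induction with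
  | empty => simpa using LMonoid.mul_bot x
  | cons a s ha ih => rw [Finset.sup_cons, Finset.sup_cons, LMonoid.mul_sup, ih]

theorem aux_fcomp_assoc {A : Type*} [Fintype A] (R S T : A → A → L) (a b : A) :
    fcomp (fcomp R S) T a b = fcomp R (fcomp S T) a b := by
  simp only [fcomp]
  rw [Finset.sup_congr rfl fun c _ => aux_sup_mul Finset.univ _ (T c b),
    Finset.sup_congr rfl fun d _ => aux_mul_sup Finset.univ _ (R a d),
    Finset.sup_comm]
  exact Finset.sup_congr rfl fun c _ => Finset.sup_congr rfl fun d _ => mul_assoc _ _ _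

theorem aux_sup_quot {A : Type*} [Fintype A] (s : Setoid A) [Fintype (Quotient s)]
    (f : Quotient s → L) :
    (Finset.univ.sup f) = Finset.univ.sup fun a : A => f (Quotient.mk s a) := by
  refine le_antisymm (Finset.sup_le fun q _ => ?_) (Finset.sup_le fun a _ => ?_)
  · obtain ⟨a, rfl⟩ := Quotient.exists_rep q
    exact Finset.le_sup (f := fun a : A => f (Quotient.mk s a)) (Finset.mem_univ a)
  · exact Finset.le_sup (f := f) (Finset.mem_univ (Quotient.mk s a))

section Paths

variable {B : Type*} [Fintype B] (R : B → B → L)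

/-- Value of a path from `a` through `l` to `b`. -/
def pv : B → List B → B → L
  | a, [], b => R a b
  | a, c :: l, b => R a c * pv c l b

theorem pv_app (l1 l2 : List B) (c : B) : ∀ a b : B,
    pv R a (l1 ++ c :: l2) b = pv R a l1 c * pv R c l2 b := by
  induction l1 with
  | nil => intro a b; rfl
  | cons d l1 ih =>
      intro a b
      show R a d * pv R d (l1 ++ c :: l2) b = R a d * pv R d l1 c * pv R c l2 b
      rw [ih d b, mul_assoc]

theorem pv_snoc (l : List B) (c : B) : ∀ a b : B,
    pv R a (l ++ [c]) b = pv R a l c * R c b := by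
  induction l with
  | nil => intro a b; rfl
  | cons d l ih =>
      intro a b
      show R a d * pv R d (l ++ [c]) b = R a d * pv R d l c * R c b
      rw [ih d b, mul_assoc]

variable (hR : ∀ b : B, R b b = 1)

include hR

theorem rpow_mono_succ (k : ℕ) (a b : B) : rpow R k a b ≤ rpow R (k + 1) a b := by
  have : rpow R k a b = rpow R k a b * R b b := by rw [hR b, mul_one]
  rw [this]
  show rpow R k a b * R b b ≤ Finset.univ.sup fun c => rpow R k a c * R c b
  exact Finset.le_sup (f := fun c => rpow R k a c * R c b) (Finset.mem_univ b)

theorem rpow_mono {j k : ℕ} (h : j ≤ k) (a b : B) : rpow R j a b ≤ rpow R k a b := by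
  induction k, h using Nat.le_induction with
  | base => exact le_rfl
  | succ k hk ih => exact ih.trans (rpow_mono_succ R hR k a b)

theorem rpow_paths (k : ℕ) (a b : B) :
    rpow R (k + 1) a b =
      (Finset.univ : Finset (Fin k → B)).sup fun p : Fin k → B => pv R a (List.ofFn p) b := by
  induction k generalizing a b with
  | zero =>
      have h1 : rpow R 1 a b = R a b := by
        show (Finset.univ.sup fun c => (if a = c then (1:L) else ⊥) * R c b) = R a b
        refine le_antisymm (Finset.sup_le fun c _ => ?_) ?_
        · by_cases h : a = c
          · subst h; rw [if_pos rfl, one_mul]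
          · rw [if_neg h, LMonoid.bot_mul]; exact bot_le
        · have := Finset.le_sup (f := fun c => (if a = c then (1:L) else ⊥) * R c b)
            (Finset.mem_univ a)
          simpa using this
      rw [h1]
      have hu : (Finset.univ : Finset (Fin 0 → B)) = {fun i => i.elim0} := by
        apply Finset.eq_singleton_iff_unique_mem.mpr
        exact ⟨Finset.mem_univ _, fun p _ => funext fun i => i.elim0⟩
      rw [hu, Finset.sup_singleton]
      rfl
  | succ k ih =>
      show (Finset.univ.sup fun c => rpow R (k+1) a c * R c b) = _
      rw [Finset.sup_congr rfl fun c _ => by rw [ih a c, aux_sup_mul]]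
      refine le_antisymm (Finset.sup_le fun c _ => Finset.sup_le fun p _ => ?_)
        (Finset.sup_le fun q _ => ?_)
      · have he : List.ofFn (Fin.snoc p c : Fin (k+1) → B) = List.ofFn p ++ [c] := by
          rw [List.ofFn_succ']
          simp [Fin.snoc_castSucc, Fin.snoc_last, List.concat_eq_append]
        have : pv R a (List.ofFn p) c * R c b = pv R a (List.ofFn (Fin.snoc p c)) b := by
          rw [he, pv_snoc]
        rw [this]
        exact Finset.le_sup (f := fun q : Fin (k+1) → B => pv R a (List.ofFn q) b)
          (Finset.mem_univ _)
      · have he : List.ofFn q =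
            List.ofFn (fun i : Fin k => q i.castSucc) ++ [q (Fin.last k)] := by
          rw [List.ofFn_succ']; simp [List.concat_eq_append]
        have : pv R a (List.ofFn q) b =
            pv R a (List.ofFn fun i : Fin k => q i.castSucc) (q (Fin.last k)) *
              R (q (Fin.last k)) b := by rw [he, pv_snoc]
        rw [this]
        refine le_trans (Finset.le_sup
          (f := fun p : Fin k → B =>
            pv R a (List.ofFn p) (q (Fin.last k)) * R (q (Fin.last k)) b)
          (Finset.mem_univ fun i : Fin k => q i.castSucc)) ?_
        exact Finset.le_sup
          (f := fun c => Finset.univ.sup fun p : Fin k → B => pv R a (List.ofFn p) c * R c b)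
          (Finset.mem_univ (q (Fin.last k)))

theorem pv_le_rpow (l : List B) (a b : B) : pv R a l b ≤ rpow R (l.length + 1) a b := by
  rw [rpow_paths R hR]
  have : pv R a l b = pv R a (List.ofFn l.get) b := by rw [List.ofFn_get]
  rw [this]
  exact Finset.le_sup (f := fun p : Fin l.length → B => pv R a (List.ofFn p) b)
    (Finset.mem_univ l.get)

omit hR in
theorem pv_shrink (a : B) (l : List B) (b : B)
    (i j : Fin (a :: l : List B).length) (hij : i < j)
    (he : (a :: l : List B).get i = (a :: l : List B).get j) :
    ∃ l' : List B, l'.length < l.length ∧ pv R a l b ≤ pv R a l' b := by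
  set c := (a :: l : List B).get j with hc
  have hij' : (i : ℕ) < (j : ℕ) := hij
  have hjv : 1 ≤ j.val := by omega
  have hjl : j.val - 1 < l.length := by
    have h2 := j.isLt; simp only [List.length_cons] at h2; omega
  have hlc : l[j.val - 1] = c := by
    have : (a :: l : List B).get j = l[j.val - 1] := by
      rcases j with ⟨jv, hj⟩
      rcases jv with _ | jv
      · exact absurd hjv (by simp)
      · simp
    rw [← this]
  rcases Nat.eq_zero_or_pos i.val with hi0 | hipos
  · -- head `a` equals `c`
    have hac : a = c := by
      have : (a :: l : List B).get i = a := by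
        rcases i with ⟨iv, hi⟩
        have : iv = 0 := hi0
        subst this; rfl
      rw [← this, he]
    refine ⟨l.drop j.val, by rw [List.length_drop]; omega, ?_⟩
    have hdec : l = l.take (j.val - 1) ++ c :: l.drop j.val := by
      conv_lhs => rw [← List.take_append_drop (j.val - 1) l]
      rw [List.drop_eq_getElem_cons hjl, hlc, Nat.sub_add_cancel hjv]
    calc pv R a l b = pv R a (l.take (j.val - 1)) c * pv R c (l.drop j.val) b := by
          rw [← pv_app]; rw [← hdec]
    _ ≤ 1 * pv R c (l.drop j.val) b := aux_mul_le_mul (aux_le_one _) le_rfl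
    _ = pv R a (l.drop j.val) b := by rw [one_mul, ← hac]
  · -- `c` occurs at positions `i.val - 1` and `j.val - 1` of `l`
    set i' := i.val - 1 with hi'
    have hii : i' + 1 < j.val := by omega
    have hi'l : i' < l.length := by omega
    have hlc' : l[i'] = c := by
      have : (a :: l : List B).get i = l[i'] := by
        rcases i with ⟨iv, hi⟩
        rcases iv with _ | iv
        · exact absurd hipos (by simp)
        · simp [hi']
      rw [← this, he]
    set t := j.val - 1 - (i' + 1) with ht
    have hdec : l = l.take i' ++ c :: ((l.drop (i' + 1)).take t ++ c :: l.drop j.val) := by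
      conv_lhs => rw [← List.take_append_drop i' l]
      congr 1
      rw [List.drop_eq_getElem_cons hi'l, hlc']
      congr 1
      conv_lhs => rw [← List.take_append_drop t (l.drop (i' + 1))]
      congr 1
      have htl : t < (l.drop (i' + 1)).length := by
        rw [List.length_drop]; omega
      rw [List.drop_eq_getElem_cons htl]
      have h1 : (l.drop (i' + 1))[t] = l[i' + 1 + t]'(by rw [ht]; omega) := by
        rw [List.getElem_drop]
      have h2 : i' + 1 + t = j.val - 1 := by omega
      congr 1
      · rw [h1]
        have : l[i' + 1 + t]'(by omega) = l[j.val - 1]'(by omega) := by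
          congr 1
        rw [this, hlc]
      · rw [List.drop_drop]
        congr 1
        omega
    refine ⟨l.take i' ++ c :: l.drop j.val, ?_, ?_⟩
    · rw [List.length_append, List.length_cons, List.length_take, List.length_drop]
      omega
    · calc pv R a l b
          = pv R a (l.take i') c * pv R c ((l.drop (i' + 1)).take t ++ c :: l.drop j.val) b := by
            rw [← pv_app]; rw [← hdec]
      _ = pv R a (l.take i') c * (pv R c ((l.drop (i' + 1)).take t) c * pv R c (l.drop j.val) b) := by
            rw [pv_app]
      _ ≤ pv R a (l.take i') c * (1 * pv R c (l.drop j.val) b) :=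
            aux_mul_le_mul le_rfl (aux_mul_le_mul (aux_le_one _) le_rfl)
      _ = pv R a (l.take i') c * pv R c (l.drop j.val) b := by rw [one_mul]
      _ = pv R a (l.take i' ++ c :: l.drop j.val) b := (pv_app R _ _ c a b).symm

theorem pv_le_card (N : ℕ) : ∀ (l : List B), l.length ≤ N → ∀ a b : B,
    pv R a l b ≤ rpow R (min (l.length + 1) (Fintype.card B)) a b := by
  induction N with
  | zero =>
      intro l hl a b
      have hn : 1 ≤ Fintype.card B := Fintype.card_pos_iff.mpr ⟨a⟩
      have hl0 : l.length = 0 := by omega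
      rw [min_eq_left (by omega)]
      exact pv_le_rpow R hR l a b
  | succ N ihN =>
      intro l hl a b
      rcases le_or_gt (l.length + 1) (Fintype.card B) with hsmall | hbig
      · rw [min_eq_left hsmall]
        exact pv_le_rpow R hR l a b
      · -- pigeonhole: shrink
        have hcard : Fintype.card B < Fintype.card (Fin (a :: l : List B).length) := by
          rw [Fintype.card_fin]
          simp only [List.length_cons]
          omega
        obtain ⟨i, j, hne, hij⟩ :=
          Fintype.exists_ne_map_eq_of_card_lt ((a :: l : List B).get) hcard
        have hsh : ∃ l' : List B, l'.length < l.length ∧ pv R a l b ≤ pv R a l' b := by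
          rcases lt_or_gt_of_ne hne with h | h
          · exact pv_shrink R a l b i j h hij
          · exact pv_shrink R a l b j i h hij.symm
        obtain ⟨l', hlen, hle⟩ := hsh
        refine le_trans hle (le_trans (ihN l' (by omega) a b) ?_)
        exact rpow_mono R hR (by omega) a b

theorem rpow_stab {k : ℕ} (hk : Fintype.card B ≤ k) (a b : B) :
    rpow R k a b = rpow R (Fintype.card B) a b := by
  have hn : 1 ≤ Fintype.card B := Fintype.card_pos_iff.mpr ⟨a⟩
  refine le_antisymm ?_ (rpow_mono R hR hk a b)
  obtain ⟨m, rfl⟩ : ∃ m, k = m + 1 := ⟨k - 1, by omega⟩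
  rw [rpow_paths R hR]
  refine Finset.sup_le fun p _ => ?_
  have := pv_le_card R hR (List.ofFn p).length (List.ofFn p) le_rfl a b
  rwa [List.length_ofFn, min_eq_right (by omega)] at this

end Paths

section EAlg

variable {A : Type*} [Fintype A] (E : A → A → L)
  (hrefl : ∀ a, E a a = 1) (htrans : ∀ a b c, E a b * E b c ≤ E a c)

include hrefl htrans in
theorem aux_EE (a b : A) : fcomp E E a b = E a b := by
  refine le_antisymm (Finset.sup_le fun c _ => htrans a c b) ?_
  have h : E a b = E a b * E b b := by rw [hrefl b, mul_one]
  rw [h]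
  exact Finset.le_sup (f := fun c => E a c * E c b) (Finset.mem_univ b)

variable {Z : Type*} (δ : A → Z → A → L)
  (hrinv : ∀ (z : Z) (a b : A),
    fcomp E (fun p q => δ p z q) a b ≤ fcomp (fun p q => δ p z q) E a b)

include hrefl htrans hrinv in
theorem aux_dq (z : Z) (a b : A) :
    fcomp (fcomp E (fun p q => δ p z q)) E a b = fcomp (fun p q => δ p z q) E a b := by
  refine le_antisymm ?_ (Finset.sup_le fun c _ => ?_)
  · calc fcomp (fcomp E (fun p q => δ p z q)) E a b
        ≤ fcomp (fcomp (fun p q => δ p z q) E) E a b :=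
          Finset.sup_le fun c _ => le_trans (aux_mul_le_mul (hrinv z a c) le_rfl)
            (Finset.le_sup (f := fun c => fcomp (fun p q => δ p z q) E a c * E c b)
              (Finset.mem_univ c))
    _ = fcomp (fun p q => δ p z q) (fcomp E E) a b := aux_fcomp_assoc _ _ _ a b
    _ = fcomp (fun p q => δ p z q) E a b :=
          Finset.sup_congr rfl fun c _ => by rw [aux_EE E hrefl htrans c b]
  · have h1 : δ a z c ≤ fcomp E (fun p q => δ p z q) a c := by
      have h : δ a z c = E a a * δ a z c := by rw [hrefl a, one_mul]
      rw [h]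
      exact Finset.le_sup (f := fun d => E a d * δ d z c) (Finset.mem_univ a)
    exact le_trans (aux_mul_le_mul h1 le_rfl)
      (Finset.le_sup (f := fun c => fcomp E (fun p q => δ p z q) a c * E c b)
        (Finset.mem_univ c))

end EAlg

end Stmt16Aux

open Fz in
/-- **Proposition 2(b) of the paper.** Let `L` be an integral ℓ-monoid,
`α` a fuzzy regular expression over a finite alphabet `X` with associated alphabet `Y`,
`A = (A, X∪Y, δ, a₀, τ)` an arbitrary nondeterministic finite automaton recognizing
`‖α_R‖`, and `E` a right invariant crisp equivalence on `A`.  Then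
`R_{A/E}(E_a, E_b) = (R_A ∘ E)(a, b)` for all `a, b ∈ A`, where `R_{A/E}` is constructed
from the factor automaton `A/E` in the same way as `R_A` is constructed from `A`. -/
theorem stmt16 {L X Y A : Type*} [IntegralLMonoid L] [Fintype X] [Fintype Y] [Fintype A]
    (α : FRE X L) (sc : L → Y) (φY : Y → L)
    (hsc : Set.BijOn sc α.scalars (Set.univ : Set Y))
    (hφY : ∀ l ∈ α.scalars, φY (sc l) = l)
    (δ : A → X ⊕ Y → A → L) (a0 : A) (τ : A → L)
    (hδ : ∀ a z b, δ a z b = 1 ∨ δ a z b = ⊥)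
    (hτ : ∀ a, τ a = 1 ∨ τ a = ⊥)
    (hrec : ∀ v : List (X ⊕ Y), lang δ a0 τ v = langR sc α v)
    (E : A → A → L)
    (hcrisp : ∀ a b, E a b = 1 ∨ E a b = ⊥)
    (hrefl : ∀ a, E a a = 1) (hsymm : ∀ a b, E a b = E b a)
    (htrans : ∀ a b c, E a b * E b c ≤ E a c)
    (hrinv : ∀ (z : X ⊕ Y) (a b : A),
      fcomp E (fun p q => δ p z q) a b ≤ fcomp (fun p q => δ p z q) E a b)
    (hτinv : ∀ a, fcompf E τ a = τ a) :
    ∀ a b : A,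
      RA φY (deltaQ E hrefl hsymm htrans δ)
          (Quotient.mk (toSetoid E hrefl hsymm htrans) a)
          (Quotient.mk (toSetoid E hrefl hsymm htrans) b) =
        fcomp (RA φY δ) E a b := by
  intro a b
  set s := toSetoid E hrefl hsymm htrans with hs
  set S := Rstep φY δ with hS
  set SQ := Rstep φY (deltaQ E hrefl hsymm htrans δ) with hSQ
  have hqeq : ∀ p q : A, Quotient.mk s p = Quotient.mk s q ↔ E p q = 1 :=
    fun p q => ⟨fun h => Quotient.exact h, fun h => Quotient.sound h⟩
  have hSrefl : ∀ p : A, S p p = 1 := fun p => by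
    rw [hS]; unfold Rstep; exact if_pos rfl
  have hSQrefl : ∀ q : Quotient s, SQ q q = 1 := fun q => by
    rw [hSQ]; unfold Rstep; exact if_pos rfl
  have hdq : ∀ (z : X ⊕ Y) (p q : A),
      deltaQ E hrefl hsymm htrans δ (Quotient.mk s p) z (Quotient.mk s q) =
        fcomp (fun c d => δ c z d) E p q := fun z p q =>
    aux_dq E hrefl htrans δ hrinv z p q
  -- S p c * E c q bounded below by φY y * δ p (inr y) c * E c q
  have hSbd : ∀ (y : Y) (p c : A), φY y * δ p (Sum.inr y) c ≤ S p c := by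
    intro y p c
    rw [hS]; unfold Rstep
    by_cases hpc : p = c
    · rw [if_pos hpc]; exact aux_le_one _
    · rw [if_neg hpc]
      exact Finset.le_sup (f := fun y : Y => φY y * δ p (Sum.inr y) c) (Finset.mem_univ y)
  -- Statement L4 : SQ ⟦p⟧ ⟦q⟧ = (S ∘ E)(p, q)
  have hL4 : ∀ p q : A, SQ (Quotient.mk s p) (Quotient.mk s q) = fcomp S E p q := by
    intro p q
    by_cases h : Quotient.mk s p = Quotient.mk s q
    · have hE : E p q = 1 := (hqeq p q).mp h
      have hl : SQ (Quotient.mk s p) (Quotient.mk s q) = 1 := by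
        rw [hSQ]; unfold Rstep; exact if_pos h
      rw [hl]
      refine le_antisymm ?_ (Finset.sup_le fun c _ => aux_le_one _)
      have h1 : (1 : L) = S p p * E p q := by rw [hSrefl p, hE, one_mul]
      rw [h1]
      exact Finset.le_sup (f := fun c => S p c * E c q) (Finset.mem_univ p)
    · have hE : E p q = ⊥ :=
        (hcrisp p q).resolve_left (fun h1 => h ((hqeq p q).mpr h1))
      have hl : SQ (Quotient.mk s p) (Quotient.mk s q) =
          Finset.univ.sup fun y : Y => φY y *
            deltaQ E hrefl hsymm htrans δ (Quotient.mk s p) (Sum.inr y) (Quotient.mk s q) := by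
        rw [hSQ]; unfold Rstep; exact if_neg h
      rw [hl]
      have hl2 : (Finset.univ.sup fun y : Y => φY y *
            deltaQ E hrefl hsymm htrans δ (Quotient.mk s p) (Sum.inr y) (Quotient.mk s q)) =
          Finset.univ.sup fun y : Y =>
            Finset.univ.sup fun c : A => φY y * (δ p (Sum.inr y) c * E c q) := by
        refine Finset.sup_congr rfl fun y _ => ?_
        rw [hdq (Sum.inr y) p q]
        exact aux_mul_sup Finset.univ _ (φY y)
      rw [hl2]
      refine le_antisymm (Finset.sup_le fun y _ => Finset.sup_le fun c _ => ?_)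
        (Finset.sup_le fun c _ => ?_)
      · by_cases hpc : p = c
        · subst hpc
          rw [hE, LMonoid.mul_bot, LMonoid.mul_bot]
          exact bot_le
        · rw [← mul_assoc]
          exact le_trans (aux_mul_le_mul (hSbd y p c) le_rfl)
            (Finset.le_sup (f := fun c => S p c * E c q) (Finset.mem_univ c))
      · by_cases hpc : p = c
        · subst hpc
          rw [hSrefl p, one_mul, hE]
          exact bot_le
        · have hSc : S p c = Finset.univ.sup fun y : Y => φY y * δ p (Sum.inr y) c := by
            rw [hS]; unfold Rstep; exact if_neg hpc
          rw [hSc, aux_sup_mul]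
          refine Finset.sup_le fun y _ => ?_
          rw [mul_assoc]
          exact le_trans
            (Finset.le_sup (f := fun c : A => φY y * (δ p (Sum.inr y) c * E c q))
              (Finset.mem_univ c))
            (Finset.le_sup
              (f := fun y : Y => Finset.univ.sup fun c : A => φY y * (δ p (Sum.inr y) c * E c q))
              (Finset.mem_univ y))
  -- Statement L5 : E ∘ S ≤ S ∘ E
  have hL5 : ∀ p q : A, fcomp E S p q ≤ fcomp S E p q := by
    intro p q
    refine Finset.sup_le fun c _ => ?_
    by_cases hcq : c = q
    · subst hcq
      rw [hSrefl c, mul_one]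
      have h1 : E p c = S p p * E p c := by rw [hSrefl p, one_mul]
      rw [h1]
      exact Finset.le_sup (f := fun d => S p d * E d c) (Finset.mem_univ p)
    · have hSc : S c q = Finset.univ.sup fun y : Y => φY y * δ c (Sum.inr y) q := by
        rw [hS]; unfold Rstep; exact if_neg hcq
      rw [hSc, aux_mul_sup]
      refine Finset.sup_le fun y _ => ?_
      rcases hcrisp p c with hpc | hpc
      · rw [hpc, one_mul]
        have h2 : δ c (Sum.inr y) q ≤ fcomp (fun u v => δ u (Sum.inr y) v) E p q := by
          refine le_trans ?_ (hrinv (Sum.inr y) p q)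
          have h3 : δ c (Sum.inr y) q = E p c * δ c (Sum.inr y) q := by
            rw [hpc, one_mul]
          rw [h3]
          exact Finset.le_sup (f := fun d => E p d * δ d (Sum.inr y) q) (Finset.mem_univ c)
        refine le_trans (aux_mul_le_mul (le_refl (φY y)) h2) ?_
        have h4 : φY y * fcomp (fun u v => δ u (Sum.inr y) v) E p q =
            Finset.univ.sup fun d => φY y * (δ p (Sum.inr y) d * E d q) :=
          aux_mul_sup Finset.univ _ (φY y)
        rw [h4]
        refine Finset.sup_le fun d _ => ?_
        rw [← mul_assoc]
        exact le_trans (aux_mul_le_mul (hSbd y p d) le_rfl)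
          (Finset.le_sup (f := fun d => S p d * E d q) (Finset.mem_univ d))
      · rw [hpc, LMonoid.bot_mul]
        exact bot_le
  -- Statement L7 : E ∘ (S ∘ E) = S ∘ E
  have hL7 : ∀ p q : A, fcomp E (fcomp S E) p q = fcomp S E p q := by
    intro p q
    refine le_antisymm ?_ ?_
    · calc fcomp E (fcomp S E) p q = fcomp (fcomp E S) E p q :=
            (aux_fcomp_assoc E S E p q).symm
      _ ≤ fcomp (fcomp S E) E p q :=
            Finset.sup_le fun c _ => le_trans (aux_mul_le_mul (hL5 p c) le_rfl)
              (Finset.le_sup (f := fun c => fcomp S E p c * E c q) (Finset.mem_univ c))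
      _ = fcomp S (fcomp E E) p q := aux_fcomp_assoc S E E p q
      _ = fcomp S E p q :=
            Finset.sup_congr rfl fun c _ => by rw [aux_EE E hrefl htrans c q]
    · have h1 : fcomp S E p q = E p p * fcomp S E p q := by rw [hrefl p, one_mul]
      rw [h1]
      exact Finset.le_sup (f := fun c => E p c * fcomp S E c q) (Finset.mem_univ p)
  -- Main induction
  have hind : ∀ (k : ℕ) (p q : A),
      rpow SQ k (Quotient.mk s p) (Quotient.mk s q) = fcomp (rpow S k) E p q := by
    intro k
    induction k with
    | zero =>
        intro p q
        have h2 : fcomp (rpow S 0) E p q = E p q := by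
          refine le_antisymm (Finset.sup_le fun c _ => ?_) ?_
          · by_cases hpc : p = c
            · subst hpc
              have h0 : rpow S 0 p p = (1:L) := if_pos rfl
              rw [h0, one_mul]
            · have h0 : rpow S 0 p c = (⊥:L) := if_neg hpc
              rw [h0, LMonoid.bot_mul]
              exact bot_le
          · have h0 : rpow S 0 p p = (1:L) := if_pos rfl
            have h3 : E p q = rpow S 0 p p * E p q := by rw [h0, one_mul]
            rw [h3]
            exact Finset.le_sup (f := fun c => rpow S 0 p c * E c q) (Finset.mem_univ p)
        rw [h2]
        by_cases h : Quotient.mk s p = Quotient.mk s q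
        · have hl : rpow SQ 0 (Quotient.mk s p) (Quotient.mk s q) = (1:L) := if_pos h
          rw [hl, (hqeq p q).mp h]
        · have hl : rpow SQ 0 (Quotient.mk s p) (Quotient.mk s q) = (⊥:L) := if_neg h
          rw [hl, ((hcrisp p q).resolve_left (fun h1 => h ((hqeq p q).mpr h1)))]
    | succ k ih =>
        intro p q
        calc rpow SQ (k+1) (Quotient.mk s p) (Quotient.mk s q)
            = Finset.univ.sup (fun q' : Quotient s =>
                rpow SQ k (Quotient.mk s p) q' * SQ q' (Quotient.mk s q)) := rfl
        _ = Finset.univ.sup (fun c : A =>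
                rpow SQ k (Quotient.mk s p) (Quotient.mk s c) *
                  SQ (Quotient.mk s c) (Quotient.mk s q)) :=
              aux_sup_quot s _
        _ = Finset.univ.sup (fun c : A => fcomp (rpow S k) E p c * fcomp S E c q) :=
              Finset.sup_congr rfl fun c _ => by rw [ih p c, hL4 c q]
        _ = fcomp (fcomp (rpow S k) E) (fcomp S E) p q := rfl
        _ = fcomp (rpow S k) (fcomp E (fcomp S E)) p q :=
              aux_fcomp_assoc (rpow S k) E (fcomp S E) p q
        _ = fcomp (rpow S k) (fcomp S E) p q :=
              Finset.sup_congr rfl fun c _ => by rw [hL7 c q]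
        _ = fcomp (fcomp (rpow S k) S) E p q := (aux_fcomp_assoc (rpow S k) S E p q).symm
        _ = fcomp (rpow S (k+1)) E p q := rfl
  have hcard : Fintype.card (Quotient s) ≤ Fintype.card A := by
    have := Fintype.card_quotient_le s
    convert this using 2 <;> exact Subsingleton.elim _ _
  calc RA φY (deltaQ E hrefl hsymm htrans δ) (Quotient.mk s a) (Quotient.mk s b)
      = rpow SQ (Fintype.card (Quotient s)) (Quotient.mk s a) (Quotient.mk s b) := rfl
  _ = rpow SQ (Fintype.card A) (Quotient.mk s a) (Quotient.mk s b) :=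
      (rpow_stab SQ hSQrefl hcard (Quotient.mk s a) (Quotient.mk s b)).symm
  _ = fcomp (rpow S (Fintype.card A)) E a b := hind _ a b
  _ = fcomp (RA φY δ) E a b := rfl
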